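/- Let 𝒰 and 𝒱 be finite sets of pairwise disjoint closed intervals of non-zero length in ℝ, and let l and s' be positive integers such that I ∩ (l * J) ≠ ∅ and |J| ≤ s'·|I| for every I ∈ 𝒰 and J ∈ 𝒱. If |𝒰| ≥ s' + 6, then |𝒱| ≤ 2 s' l². -/

import Mathlib

open MeasureTheory Set Pointwise Metric Function
open scoped RealInnerProductSpace ENNReal

noncomputable section

/-- `ℝ^d` as a Euclidean space. -/
abbrev Euc (d : ℕ) := EuclideanSpace ℝ (Fin d)

/-- A shape: a compact set that is non-degenerate, i.e. not contained in a proper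
affine subspace. -/
def IsShape {d : ℕ} (B : Set (Euc d)) : Prop :=
  IsCompact B ∧ affineSpan ℝ B = ⊤

/-- `B₁ ⊑ₛ B₂`: for every `x ∈ B₂` there is a translate `B₁'` of `B₁` with `x ∈ B₁'`
and `vol (B₁' ∩ B₂) ≥ vol B₁ / s`. -/
def SqIn {d : ℕ} (s : ℝ) (B₁ B₂ : Set (Euc d)) : Prop :=
  ∀ x ∈ B₂, ∃ v : Euc d, x ∈ v +ᵥ B₁ ∧
    volume B₁ / ENNReal.ofReal s ≤ volume ((v +ᵥ B₁) ∩ B₂)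

/-- `B₁` and `B₂` are `⊑ₛ`-comparable. -/
def SqComparable {d : ℕ} (s : ℝ) (B₁ B₂ : Set (Euc d)) : Prop :=
  SqIn s B₁ B₂ ∨ SqIn s B₂ B₁

/-- `B₁ ≤ₖ B₂`: some translate of `B₁` is contained in `k • B₂`. -/
def LeK {d : ℕ} (k : ℝ) (B₁ B₂ : Set (Euc d)) : Prop :=
  ∃ v : Euc d, v +ᵥ B₁ ⊆ k • B₂

/-- `B₁ ≤_{k,s} B₂`: for every `x ∈ k • B₂` there are a translate `B₁'` of `B₁` and a
translate `B₁''` of `s • B₁` with `x ∈ B₁''` and `B₁' ⊆ B₁'' ∩ k • B₂`. -/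
def LeKS {d : ℕ} (k s : ℝ) (B₁ B₂ : Set (Euc d)) : Prop :=
  ∀ x ∈ k • B₂, ∃ v w : Euc d,
    x ∈ w +ᵥ (s • B₁) ∧ v +ᵥ B₁ ⊆ (w +ᵥ (s • B₁)) ∩ (k • B₂)

/-- An intersection representation of a graph in `ℝ^d`. -/
def IsIntersectionRep {V : Type*} {d : ℕ} (G : SimpleGraph V) (φ : V → Set (Euc d)) : Prop :=
  (∀ v, (φ v).Nonempty) ∧ ∀ u v : V, u ≠ v → ((φ u ∩ φ v).Nonempty ↔ G.Adj u v)

/-- A representation is `c`-thin if every point lies in at most `c` of the sets. -/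
def IsThin {V : Type*} {d : ℕ} (c : ℝ) (φ : V → Set (Euc d)) : Prop :=
  ∀ x : Euc d, ({v : V | x ∈ φ v}.ncard : ℝ) ≤ c

/-- A `(c,⊑ₛ)`-tame representation. -/
def IsTame {V : Type*} {d : ℕ} (c s : ℝ) (G : SimpleGraph V) (φ : V → Set (Euc d)) : Prop :=
  IsIntersectionRep G φ ∧ IsThin c φ ∧
    (∀ v, Convex ℝ (φ v) ∧ IsShape (φ v)) ∧
    ∀ u v : V, SqComparable s (φ u) (φ v)

/-- An `S`-shaped representation: each vertex is assigned a translate of a shape in `S`. -/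
def IsSShaped {V : Type*} {d : ℕ} (S : Set (Set (Euc d))) (φ : V → Set (Euc d)) : Prop :=
  ∀ v, ∃ B ∈ S, ∃ t : Euc d, φ v = t +ᵥ B

/-- `X` is a balanced separator: every component of `G - X` has at most `(2/3)|V(G)|`
vertices. -/
def IsBalancedSeparator {V : Type*} [Fintype V] (G : SimpleGraph V) (X : Set V) : Prop :=
  ∀ C : (G.induce Xᶜ).ConnectedComponent,
    (C.supp.ncard : ℝ) ≤ 2 / 3 * Fintype.card V

/-- `L_{G,≺,r}(v)`, where the linear ordering `≺` is encoded by an injective `ρ : V → ℕ`: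
the set of vertices `x ⪯ v` reachable from `v` by a path of length at most `r` all of whose
internal vertices are `≻ v`. -/
def Lset {V : Type*} (G : SimpleGraph V) (ρ : V → ℕ) (r : ℕ) (v : V) : Set V :=
  {x | ρ x ≤ ρ v ∧ ∃ p : G.Walk v x, p.IsPath ∧ p.length ≤ r ∧
    ∀ z ∈ p.support, z ≠ v → z ≠ x → ρ v < ρ z}

/-- The height of a set: the least `h ≥ 0` such that the set lies between two parallel
hyperplanes at distance `h`. -/
def heightOf {d : ℕ} (B : Set (Euc d)) : ℝ :=
  sInf {h : ℝ | 0 ≤ h ∧ ∃ u : Euc d, ‖u‖ = 1 ∧ ∃ a : ℝ,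
    ∀ x ∈ B, a ≤ inner ℝ u x ∧ inner ℝ u x ≤ a + h}

/-- A parallelepiped with center `p` and sides `v₁, …, v_d`. -/
def IsParallelepiped {d : ℕ} (T : Set (Euc d)) : Prop :=
  ∃ (p : Euc d) (v : Fin d → Euc d), LinearIndependent ℝ v ∧
    T = {x | ∃ α : Fin d → ℝ, (∀ i, α i ∈ Set.Icc (-1 : ℝ) 1) ∧ x = p + ∑ i, α i • v i}

/-- `T` is an envelope of `B`: a parallelepiped of smallest volume containing `B`. -/
def IsEnvelope {d : ℕ} (T B : Set (Euc d)) : Prop :=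
  IsParallelepiped T ∧ B ⊆ T ∧
    ∀ T' : Set (Euc d), IsParallelepiped T' → B ⊆ T' → volume T ≤ volume T'

/-- A box in `ℝ^d`: a product of `d` closed intervals. -/
def IsBox {d : ℕ} (B : Set (Euc d)) : Prop :=
  ∃ a b : Fin d → ℝ, B = {x : Euc d | ∀ i, x i ∈ Set.Icc (a i) (b i)}

/-- `Q` is `k'`-fat: every ball `B` centered in `Q` satisfies
`vol (B ∩ Q) ≥ min (vol B / k') (vol Q)`. -/
def IsFat {d : ℕ} (k' : ℝ) (Q : Set (Euc d)) : Prop :=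
  ∀ x ∈ Q, ∀ ρ : ℝ, 0 < ρ →
    min (volume (Metric.closedBall x ρ) / ENNReal.ofReal k') (volume Q)
      ≤ volume (Metric.closedBall x ρ ∩ Q)

/-- The strong product of two simple graphs. -/
def strongProd {α β : Type*} (G : SimpleGraph α) (H : SimpleGraph β) :
    SimpleGraph (α × β) where
  Adj x y := x ≠ y ∧ (x.1 = y.1 ∨ G.Adj x.1 y.1) ∧ (x.2 = y.2 ∨ H.Adj x.2 y.2)
  symm := by
    constructor
    rintro ⟨a1, a2⟩ ⟨b1, b2⟩ ⟨hne, h1, h2⟩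
    refine ⟨hne.symm, ?_, ?_⟩
    · rcases h1 with h | h
      · exact Or.inl h.symm
      · exact Or.inr h.symm
    · rcases h2 with h | h
      · exact Or.inl h.symm
      · exact Or.inr h.symm
  loopless := by
    constructor
    rintro ⟨a1, a2⟩ ⟨hne, -, -⟩
    exact hne rfl

/-- The graph `G⁺(N, l)`: add hubs `v₁, …, v_N` and internally disjoint paths of length `l`
from each hub to each vertex of `G`.  The internal vertices of the path from hub `i` to
vertex `u` are `(i, u, 0), …, (i, u, l-2)`. -/
def plusGraph {V : Type*} (G : SimpleGraph V) (N l : ℕ) :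
    SimpleGraph (V ⊕ (Fin N ⊕ Fin N × V × Fin (l - 1))) :=
  SimpleGraph.fromRel (fun x y =>
    match x, y with
    | Sum.inl u, Sum.inl w => G.Adj u w
    | Sum.inr (Sum.inl _), Sum.inl _ => l = 1
    | Sum.inr (Sum.inl i), Sum.inr (Sum.inr (j, _, t)) => i = j ∧ (t : ℕ) = 0
    | Sum.inr (Sum.inr (i, u, t)), Sum.inr (Sum.inr (j, w, t')) =>
        i = j ∧ u = w ∧ (t' : ℕ) = (t : ℕ) + 1
    | Sum.inr (Sum.inr (_, u, t)), Sum.inl w => u = w ∧ (t : ℕ) = l - 2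
    | _, _ => False)

/-- `γ_d`: the supremum over affine hyperplanes `H` of the `(d-1)`-dimensional Hausdorff
measure of the intersection of `H` with the unit cube. -/
def gammaConst (d : ℕ) : ℝ :=
  sSup {γ : ℝ | ∃ (u : Euc d) (a : ℝ), ‖u‖ = 1 ∧
    γ = (MeasureTheory.Measure.hausdorffMeasure ((d : ℝ) - 1)
      ({x : Euc d | inner ℝ u x = a} ∩ {x : Euc d | ∀ i, x i ∈ Set.Icc (0 : ℝ) 1})).toReal}

/-- The sequence `ℓ_h`: `ℓ_1 = 1` and `ℓ_{h+1} = ℓ_h / (2(h+1))`. -/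
def ellSeq : ℕ → ℝ
  | 0 => 2
  | n + 1 => ellSeq n / (2 * (n + 1))

/-- The trapezoid `T_h` with vertices `(0,0)`, `(ℓ_h,0)`, `(ℓ_h, hℓ_h)`, `(0, 2hℓ_h)`. -/
def trapezoidShape (h : ℕ) : Set (Euc 2) :=
  convexHull ℝ {(!₂[0, 0] : Euc 2), !₂[ellSeq h, 0], !₂[ellSeq h, h * ellSeq h],
    !₂[0, 2 * h * ellSeq h]}

/-- An axis-aligned square `S_h` with sides of length `ℓ_h`. -/
def squareShape (h : ℕ) : Set (Euc 2) :=
  {x : Euc 2 | x 0 ∈ Set.Icc 0 (ellSeq h) ∧ x 1 ∈ Set.Icc 0 (ellSeq h)}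

/-- The set `S*` of shapes. -/
def SStar : Set (Set (Euc 2)) :=
  {B | ∃ h : ℕ, 0 < h ∧ (B = trapezoidShape h ∨ B = squareShape h)}

/-- A class of finite graphs is `⊑`-representable. -/
def SqRepresentable (𝒢 : ∀ V : Type, Fintype V → SimpleGraph V → Prop) : Prop :=
  ∃ d c s : ℕ, 0 < d ∧ 0 < c ∧ 0 < s ∧
    ∀ (V : Type) (instV : Fintype V) (G : SimpleGraph V), 𝒢 V instV G →
      ∃ S : Set (Set (Euc d)), (∀ B ∈ S, Convex ℝ B ∧ IsShape B) ∧
        S.Pairwise (SqComparable (s : ℝ)) ∧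
        ∃ φ : V → Set (Euc d), IsIntersectionRep G φ ∧ IsThin (c : ℝ) φ ∧ IsSShaped S φ

end

/-- Disjoint nonempty closed intervals inside `[c, d]` have total length at most `d - c`. -/
lemma sum_len_le_aux (F : Finset (ℝ × ℝ)) (hpos : ∀ p ∈ F, 0 < p.2)
    (hdisj : (F : Set (ℝ × ℝ)).Pairwise fun p q =>
      Disjoint (Set.Icc (p.1 - p.2) (p.1 + p.2)) (Set.Icc (q.1 - q.2) (q.1 + q.2)))
    (c d : ℝ)
    (hsub : ∀ p ∈ F, Set.Icc (p.1 - p.2) (p.1 + p.2) ⊆ Set.Icc c d)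
    (hne : F.Nonempty) :
    ∑ p ∈ F, 2 * p.2 ≤ d - c := by
  obtain ⟨p0, hp0⟩ := hne
  have hcd : c ≤ d := by
    have h0 := hsub p0 hp0 ⟨le_rfl, by linarith [hpos p0 hp0]⟩
    exact le_trans h0.1 h0.2
  have hm : ∑ p ∈ F, MeasureTheory.volume (Set.Icc (p.1 - p.2) (p.1 + p.2)) ≤
      MeasureTheory.volume (Set.Icc c d) := by
    rw [← MeasureTheory.measure_biUnion_finset hdisj (fun p _ => measurableSet_Icc)]
    exact MeasureTheory.measure_mono (Set.iUnion₂_subset hsub)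
  have hvol : ∀ p : ℝ × ℝ, MeasureTheory.volume (Set.Icc (p.1 - p.2) (p.1 + p.2)) =
      ENNReal.ofReal (2 * p.2) := by
    intro p
    rw [Real.volume_Icc]
    congr 1
    ring
  simp only [hvol, Real.volume_Icc] at hm
  rw [← ENNReal.ofReal_sum_of_nonneg (fun p hp => by linarith [hpos p hp])] at hm
  exact (ENNReal.ofReal_le_ofReal_iff (by linarith)).mp hm

theorem stmt16 (𝒰 𝒱 : Finset (ℝ × ℝ))
    (hU : ∀ p ∈ 𝒰, 0 < p.2) (hV : ∀ p ∈ 𝒱, 0 < p.2)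
    (hUdisj : (𝒰 : Set (ℝ × ℝ)).Pairwise fun p q =>
      Disjoint (Set.Icc (p.1 - p.2) (p.1 + p.2)) (Set.Icc (q.1 - q.2) (q.1 + q.2)))
    (hVdisj : (𝒱 : Set (ℝ × ℝ)).Pairwise fun p q =>
      Disjoint (Set.Icc (p.1 - p.2) (p.1 + p.2)) (Set.Icc (q.1 - q.2) (q.1 + q.2)))
    (l s' : ℕ) (hl : 0 < l) (hs' : 0 < s')
    (hmeet : ∀ p ∈ 𝒰, ∀ q ∈ 𝒱,
      (Set.Icc (p.1 - p.2) (p.1 + p.2) ∩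
        Set.Icc (q.1 - (l : ℝ) * q.2) (q.1 + (l : ℝ) * q.2)).Nonempty)
    (hlen : ∀ p ∈ 𝒰, ∀ q ∈ 𝒱, 2 * q.2 ≤ (s' : ℝ) * (2 * p.2))
    (hcard : s' + 6 ≤ 𝒰.card) :
    𝒱.card ≤ 2 * s' * l ^ 2 := by
  have hUne : 𝒰.Nonempty := Finset.card_pos.mp (by omega)
  obtain ⟨pm, hpm, hpmmin⟩ := 𝒰.exists_min_image (fun p => p.2) hUne
  obtain ⟨pL, hpL, hpLmin⟩ := 𝒰.exists_min_image (fun p => p.1 - p.2) hUne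
  obtain ⟨pR, hpR, hpRmax⟩ := 𝒰.exists_max_image (fun p => p.1 + p.2) hUne
  set m := pm.2 with hmdef
  have hm0 : 0 < m := hU pm hpm
  set bL := pL.1 + pL.2 with hbLdef
  set aR := pR.1 - pR.2 with haRdef
  -- pL ≠ pR
  have hLR : pL ≠ pR := by
    intro h
    obtain ⟨p, hp, hpne⟩ := Finset.exists_mem_ne (show 1 < 𝒰.card by omega) pL
    have hd := hUdisj hp hpL hpne
    have h1 := hpLmin p hp
    have h2' := hpRmax p hp
    rw [← h] at h2'
    have hx : (p.1 - p.2) ∈ Set.Icc (p.1 - p.2) (p.1 + p.2) ∩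
        Set.Icc (pL.1 - pL.2) (pL.1 + pL.2) := by
      constructor
      · exact ⟨le_rfl, by linarith [hU p hp]⟩
      · exact ⟨h1, by linarith [hU p hp]⟩
    exact Set.disjoint_left.mp hd hx.1 hx.2
  -- middle intervals
  set F := (𝒰.erase pL).erase pR with hFdef
  have hpRmem : pR ∈ 𝒰.erase pL := Finset.mem_erase.mpr ⟨fun h => hLR h.symm, hpR⟩
  have hFcard : F.card = 𝒰.card - 2 := by
    rw [hFdef, Finset.card_erase_of_mem hpRmem, Finset.card_erase_of_mem hpL]; omega
  have hFsubU : F ⊆ 𝒰 := (Finset.erase_subset _ _).trans (Finset.erase_subset _ _)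
  have hFsub : ∀ p ∈ F, Set.Icc (p.1 - p.2) (p.1 + p.2) ⊆ Set.Icc bL aR := by
    intro p hpF
    have hpU : p ∈ 𝒰 := hFsubU hpF
    have hpneL : p ≠ pL := Finset.ne_of_mem_erase (Finset.mem_of_mem_erase hpF)
    have hpneR : p ≠ pR := Finset.ne_of_mem_erase hpF
    have hp2 := hU p hpU
    have hleft : bL < p.1 - p.2 := by
      by_contra hcon
      push_neg at hcon
      have hd := hUdisj hpU hpL hpneL
      exact Set.disjoint_left.mp hd ⟨le_rfl, by linarith⟩
        ⟨hpLmin p hpU, hcon⟩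
    have hright : p.1 + p.2 < aR := by
      by_contra hcon
      push_neg at hcon
      have hd := hUdisj hpU hpR hpneR
      exact Set.disjoint_left.mp hd ⟨by linarith, le_rfl⟩
        ⟨hcon, hpRmax p hpU⟩
    intro x hx
    exact ⟨by linarith [hx.1], by linarith [hx.2]⟩
  have hFne : F.Nonempty := Finset.card_pos.mp (by omega)
  have hsumF : ∑ p ∈ F, 2 * p.2 ≤ aR - bL :=
    sum_len_le_aux F (fun p hp => hU p (hFsubU hp))
      (hUdisj.mono (by exact_mod_cast hFsubU)) bL aR hFsub hFne
  have hsumFlow : (F.card : ℝ) * (2 * m) ≤ ∑ p ∈ F, 2 * p.2 := by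
    calc (F.card : ℝ) * (2 * m) = ∑ _p ∈ F, 2 * m := by
          rw [Finset.sum_const, nsmul_eq_mul]
      _ ≤ ∑ p ∈ F, 2 * p.2 :=
          Finset.sum_le_sum fun p hp => by linarith [hpmmin p (hFsubU hp)]
  have hcardF : ((s' : ℝ) + 4) ≤ (F.card : ℝ) := by
    have : s' + 4 ≤ F.card := by omega
    exact_mod_cast this
  have hL : 2 * ((s' : ℝ) + 4) * m ≤ aR - bL := by
    nlinarith [hsumF, hsumFlow, hm0]
  -- now the 𝒱 side
  rcases Finset.eq_empty_or_nonempty 𝒱 with hVe | hVne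
  · simp [hVe]
  have hl1 : (1 : ℝ) ≤ (l : ℝ) := by exact_mod_cast hl
  have hs'1 : (1 : ℝ) ≤ (s' : ℝ) := by exact_mod_cast hs'
  set L := aR - bL with hLdef
  have hL0 : 0 < L := by nlinarith
  have hq1 : ∀ q ∈ 𝒱, q.1 - (l : ℝ) * q.2 ≤ bL ∧ aR ≤ q.1 + (l : ℝ) * q.2 := by
    intro q hq
    constructor
    · obtain ⟨x, hx1, hx2⟩ := hmeet pL hpL q hq
      exact le_trans hx2.1 hx1.2
    · obtain ⟨x, hx1, hx2⟩ := hmeet pR hpR q hq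
      exact le_trans hx1.1 hx2.2
  have hqm : ∀ q ∈ 𝒱, q.2 ≤ (s' : ℝ) * m := by
    intro q hq
    have := hlen pm hpm q hq
    linarith
  have hqlen : ∀ q ∈ 𝒱, L ≤ 2 * (l : ℝ) * q.2 := by
    intro q hq
    obtain ⟨h1, h2⟩ := hq1 q hq
    simp only [hLdef]
    linarith
  have hVsub : ∀ q ∈ 𝒱, Set.Icc (q.1 - q.2) (q.1 + q.2) ⊆
      Set.Icc (aR - 2 * (l : ℝ) * (s' : ℝ) * m) (bL + 2 * (l : ℝ) * (s' : ℝ) * m) := by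
    intro q hq x hx
    obtain ⟨h1, h2⟩ := hq1 q hq
    have hq2 := hV q hq
    have hqs := hqm q hq
    constructor
    · have : aR - 2 * (l : ℝ) * q.2 ≤ q.1 - q.2 := by nlinarith
      have h3 : 2 * (l : ℝ) * q.2 ≤ 2 * (l : ℝ) * ((s' : ℝ) * m) := by nlinarith
      linarith [hx.1]
    · have : q.1 + q.2 ≤ bL + 2 * (l : ℝ) * q.2 := by nlinarith
      have h3 : 2 * (l : ℝ) * q.2 ≤ 2 * (l : ℝ) * ((s' : ℝ) * m) := by nlinarith
      linarith [hx.2]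
  have hsumV : ∑ q ∈ 𝒱, 2 * q.2 ≤
      (bL + 2 * (l : ℝ) * (s' : ℝ) * m) - (aR - 2 * (l : ℝ) * (s' : ℝ) * m) :=
    sum_len_le_aux 𝒱 hV hVdisj _ _ hVsub hVne
  have hsumVlow : (𝒱.card : ℝ) * (L / (l : ℝ)) ≤ ∑ q ∈ 𝒱, 2 * q.2 := by
    calc (𝒱.card : ℝ) * (L / (l : ℝ)) = ∑ _q ∈ 𝒱, L / (l : ℝ) := by
          rw [Finset.sum_const, nsmul_eq_mul]
      _ ≤ ∑ q ∈ 𝒱, 2 * q.2 := by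
          refine Finset.sum_le_sum fun q hq => ?_
          rw [div_le_iff₀ (by linarith)]
          have := hqlen q hq
          linarith
  clear_value L m bL aR F
  -- final arithmetic
  have hkey : (𝒱.card : ℝ) * L ≤ 4 * (l : ℝ) ^ 2 * (s' : ℝ) * m := by
    have h1 : (𝒱.card : ℝ) * (L / (l : ℝ)) ≤ 4 * (l : ℝ) * (s' : ℝ) * m - L := by
      calc (𝒱.card : ℝ) * (L / (l : ℝ)) ≤ ∑ q ∈ 𝒱, 2 * q.2 := hsumVlow
        _ ≤ _ := hsumV
        _ = 4 * (l : ℝ) * (s' : ℝ) * m - L := by simp only [hLdef]; ring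
    have hl0 : (0 : ℝ) < (l : ℝ) := by linarith
    have h2 : (𝒱.card : ℝ) * L ≤ (l : ℝ) * (4 * (l : ℝ) * (s' : ℝ) * m - L) := by
      have := mul_le_mul_of_nonneg_left h1 (le_of_lt hl0)
      calc (𝒱.card : ℝ) * L = (l : ℝ) * ((𝒱.card : ℝ) * (L / (l : ℝ))) := by
            field_simp
        _ ≤ _ := this
    have h3 : (0:ℝ) ≤ (l:ℝ) * L := mul_nonneg hl0.le hL0.le
    have h4 : (l:ℝ) * (4*(l:ℝ)*(s':ℝ)*m - L) = 4*(l:ℝ)^2*(s':ℝ)*m - (l:ℝ)*L := by ring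
    linarith
  have hfinal : (𝒱.card : ℝ) ≤ 2 * (s' : ℝ) * (l : ℝ) ^ 2 := by
    have hc0 : (0 : ℝ) ≤ (𝒱.card : ℝ) := Nat.cast_nonneg _
    have hLlow : 2*((s':ℝ)+4)*m ≤ L := hL
    have h5 : (𝒱.card:ℝ) * (2*((s':ℝ)+4)*m) ≤ (𝒱.card:ℝ)*L :=
      mul_le_mul_of_nonneg_left hLlow hc0
    have h6 : (𝒱.card:ℝ) * (2*((s':ℝ)+4)*m) ≤ 4*(l:ℝ)^2*(s':ℝ)*m := le_trans h5 hkey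
    have h6' : ((𝒱.card:ℝ) * ((s':ℝ)+4)) * (2*m) ≤ (2*(l:ℝ)^2*(s':ℝ)) * (2*m) := by
      linear_combination h6
    have h7 := le_of_mul_le_mul_right h6' (by linarith : (0:ℝ) < 2*m)
    have h8 : (𝒱.card:ℝ) * 1 ≤ (𝒱.card:ℝ) * ((s':ℝ)+4) :=
      mul_le_mul_of_nonneg_left (by linarith) hc0
    have h9 : ((𝒱.card:ℝ) * ((s':ℝ)+4)) ≤ 2*(s':ℝ)*(l:ℝ)^2 := by linarith [h7]
    linarith [h8, h9]
  have hfin2 : (𝒱.card : ℝ) ≤ ((2 * s' * l ^ 2 : ℕ) : ℝ) := by push_cast; linarith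
  exact_mod_cast hfin2
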